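/- Under Assumptions A with ε_m < ε_M, the function log 𝒫 satisfies the midpoint concavity inequality log 𝒫(ε) + log 𝒫(δ) ≤ 2·log 𝒫((ε + δ)/2) for all ε, δ ∈ (ε_m, ε_M). -/

import Mathlib

open Filter Set

/-- Under Assumptions A with `ε_m < ε_M`, the function `log 𝒫` satisfies midpoint
concavity: `log 𝒫(ε) + log 𝒫(δ) ≤ 2 log 𝒫((ε+δ)/2)` for all `ε, δ ∈ (ε_m, ε_M)`. -/
theorem logP_midpoint_concave
    (p : ℕ → ℕ → ℕ) (A B : ℕ → ℕ) (K C : ℝ)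
    (hK : 0 < K) (hpK : ∀ n, 1 ≤ n → ∀ m, (p n m : ℝ) ≤ K ^ n)
    (hC : 0 < C)
    (hABle : ∀ n, 1 ≤ n → A n ≤ B n)
    (hBC : ∀ n, 1 ≤ n → (B n : ℝ) ≤ C * n)
    (hpos : ∀ n, 1 ≤ n → ∀ m, A n ≤ m → m ≤ B n → 0 < p n m)
    (hzero : ∀ n, 1 ≤ n → ∀ m, (m < A n ∨ B n < m) → p n m = 0)
    (hsuper : ∀ n₁ n₂, 1 ≤ n₁ → 1 ≤ n₂ → ∀ m₁ m₂,
      p n₁ m₁ * p n₂ m₂ ≤ p (n₁ + n₂) (m₁ + m₂))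
    (εm εM : ℝ)
    (hεm : Tendsto (fun n : ℕ => (A n : ℝ) / n) atTop (nhds εm))
    (hεM : Tendsto (fun n : ℕ => (B n : ℝ) / n) atTop (nhds εM))
    (hlt : εm < εM)
    (logP : ℝ → ℝ)
    (hP : ∀ ε ∈ Set.Ioo εm εM,
      Tendsto (fun n : ℕ => Real.log (p n ⌊ε * n⌋₊) / n) atTop (nhds (logP ε))) :
    ∀ ε ∈ Set.Ioo εm εM, ∀ δ ∈ Set.Ioo εm εM,
      logP ε + logP δ ≤ 2 * logP ((ε + δ) / 2) := by
  intro ε hε δ hδ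
  set γ : ℝ := (ε + δ) / 2 with hγdef
  have hγ : γ ∈ Set.Ioo εm εM :=
    ⟨by rw [hγdef]; linarith [hε.1, hδ.1], by rw [hγdef]; linarith [hε.2, hδ.2]⟩
  -- εm is nonnegative, hence so are ε, δ, γ
  have hεm0 : 0 ≤ εm := by
    refine ge_of_tendsto hεm ?_
    filter_upwards [eventually_ge_atTop 1] with n hn
    positivity
  have hε0 : 0 ≤ ε := le_of_lt (lt_of_le_of_lt hεm0 hε.1)
  have hδ0 : 0 ≤ δ := le_of_lt (lt_of_le_of_lt hεm0 hδ.1)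
  have hγ0 : 0 ≤ γ := le_of_lt (lt_of_le_of_lt hεm0 hγ.1)
  have hinv : Tendsto (fun n : ℕ => 1 / (n : ℝ)) atTop (nhds 0) :=
    tendsto_one_div_atTop_nhds_zero_nat
  -- choose a padding length n₀
  have h1 : ∀ᶠ n : ℕ in atTop, (A n : ℝ) / n + 2 / n < γ := by
    have : Tendsto (fun n : ℕ => (A n : ℝ) / n + 2 / n) atTop (nhds (εm + 2 * 0)) := by
      have h2 : Tendsto (fun n : ℕ => 2 / (n : ℝ)) atTop (nhds (2 * 0)) := by
        simpa [div_eq_mul_inv, mul_assoc] using (hinv.const_mul 2)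
      simpa [div_eq_mul_inv] using hεm.add h2
    exact this.eventually_lt_const (by simpa using hγ.1)
  have h2 : ∀ᶠ n : ℕ in atTop, γ + 3 / n < (B n : ℝ) / n := by
    have hB : Tendsto (fun n : ℕ => (B n : ℝ) / n - 3 / n) atTop (nhds (εM - 3 * 0)) := by
      have h3 : Tendsto (fun n : ℕ => 3 / (n : ℝ)) atTop (nhds (3 * 0)) := by
        simpa [div_eq_mul_inv, mul_assoc] using (hinv.const_mul 3)
      simpa [div_eq_mul_inv] using hεM.sub h3
    have := hB.eventually_const_lt (show γ < εM - 3 * 0 by simpa using hγ.2)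
    filter_upwards [this] with n hn; linarith
  obtain ⟨n₀, hn₀1, hAn₀, hBn₀⟩ :
      ∃ n₀ : ℕ, 1 ≤ n₀ ∧ (A n₀ : ℝ) + 2 < γ * n₀ ∧ γ * n₀ + 3 < (B n₀ : ℝ) := by
    obtain ⟨n₀, ⟨hn₀1, hA⟩, hB⟩ := (((eventually_ge_atTop 1).and h1).and h2).exists
    have hn0 : (0 : ℝ) < n₀ := by exact_mod_cast hn₀1
    refine ⟨n₀, hn₀1, ?_, ?_⟩
    · rw [← add_div, div_lt_iff₀ hn0] at hA
      linarith
    · have h := mul_lt_mul_of_pos_right hB hn0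
      rw [add_mul, div_mul_cancel₀ _ (ne_of_gt hn0), div_mul_cancel₀ _ (ne_of_gt hn0)] at h
      linarith
  have hn₀0 : (0:ℝ) < (n₀:ℝ) := by exact_mod_cast hn₀1
  -- the key combinatorial inequality
  have hkey : ∀ n : ℕ, 1 ≤ n →
      p n ⌊ε*(n:ℝ)⌋₊ * p n ⌊δ*(n:ℝ)⌋₊ ≤ p (2*n+n₀) ⌊γ*((2*n+n₀:ℕ):ℝ)⌋₊ := by
    intro n hn
    set s : ℕ := ⌊ε*(n:ℝ)⌋₊ + ⌊δ*(n:ℝ)⌋₊ with hs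
    set M : ℕ := ⌊γ*((2*n+n₀:ℕ):ℝ)⌋₊ with hM
    have hcast : ((2*n+n₀ : ℕ):ℝ) = 2*(n:ℝ) + (n₀:ℝ) := by push_cast; ring
    have hexp : γ * ((2*n+n₀:ℕ):ℝ) = ε*(n:ℝ) + δ*(n:ℝ) + γ*(n₀:ℝ) := by
      rw [hcast, hγdef]; ring
    have hfl1 := Nat.floor_le (mul_nonneg hε0 (Nat.cast_nonneg n))
    have hfl2 := Nat.floor_le (mul_nonneg hδ0 (Nat.cast_nonneg n))
    have hγn₀ : 0 ≤ γ * (n₀:ℝ) := mul_nonneg hγ0 (Nat.cast_nonneg n₀)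
    have hsM : s ≤ M := by
      apply Nat.le_floor
      rw [hexp, hs]; push_cast
      linarith
    set dn : ℕ := M - s with hdn
    have hdcast : (dn:ℝ) = (M:ℝ) - (s:ℝ) := by
      rw [hdn, Nat.cast_sub hsM]
    have hMlb : γ * ((2*n+n₀:ℕ):ℝ) - 1 < (M:ℝ) := Nat.sub_one_lt_floor _
    have hMub : (M:ℝ) ≤ γ * ((2*n+n₀:ℕ):ℝ) := Nat.floor_le (by positivity)
    have hεlb : ε*(n:ℝ) - 1 < (⌊ε*(n:ℝ)⌋₊:ℝ) := Nat.sub_one_lt_floor _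
    have hδlb : δ*(n:ℝ) - 1 < (⌊δ*(n:ℝ)⌋₊:ℝ) := Nat.sub_one_lt_floor _
    have hdA : A n₀ ≤ dn := by
      have h : (A n₀ : ℝ) < (dn:ℝ) := by
        rw [hdcast, hs]; push_cast
        rw [hexp] at hMlb
        linarith
      exact (by exact_mod_cast h : A n₀ < dn).le
    have hdB : dn ≤ B n₀ := by
      have h : (dn:ℝ) ≤ (B n₀:ℝ) := by
        rw [hdcast, hs]; push_cast
        rw [hexp] at hMub
        linarith
      exact_mod_cast h
    have hp0 : 0 < p n₀ dn := hpos n₀ hn₀1 dn hdA hdB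
    calc p n ⌊ε*(n:ℝ)⌋₊ * p n ⌊δ*(n:ℝ)⌋₊
        ≤ p (n+n) s := hsuper n n hn hn _ _
      _ ≤ p (n+n) s * p n₀ dn := Nat.le_mul_of_pos_right _ hp0
      _ ≤ p (n+n+n₀) (s + dn) := hsuper (n+n) n₀ (by omega) hn₀1 _ _
      _ = p (2*n+n₀) M := by
          rw [hdn, Nat.add_sub_cancel' hsM]
          congr 1
          omega
  -- eventual positivity at ε and δ
  have hposε : ∀ᶠ n : ℕ in atTop, 0 < p n ⌊ε*(n:ℝ)⌋₊ := by
    filter_upwards [eventually_ge_atTop 1, hεm.eventually_lt_const hε.1,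
      hεM.eventually_const_lt hε.2] with n hn hA hB
    have hn0 : (0:ℝ) < (n:ℝ) := by exact_mod_cast hn
    refine hpos n hn _ ?_ ?_
    · exact Nat.le_floor ((div_lt_iff₀ hn0).mp hA).le
    · have h1 : ε * (n:ℝ) < (B n:ℝ) := (lt_div_iff₀ hn0).mp hB
      have h2 : (⌊ε*(n:ℝ)⌋₊:ℝ) ≤ ε*(n:ℝ) := Nat.floor_le (by positivity)
      exact_mod_cast h2.trans h1.le
  have hposδ : ∀ᶠ n : ℕ in atTop, 0 < p n ⌊δ*(n:ℝ)⌋₊ := by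
    filter_upwards [eventually_ge_atTop 1, hεm.eventually_lt_const hδ.1,
      hεM.eventually_const_lt hδ.2] with n hn hA hB
    have hn0 : (0:ℝ) < (n:ℝ) := by exact_mod_cast hn
    refine hpos n hn _ ?_ ?_
    · exact Nat.le_floor ((div_lt_iff₀ hn0).mp hA).le
    · have h1 : δ * (n:ℝ) < (B n:ℝ) := (lt_div_iff₀ hn0).mp hB
      have h2 : (⌊δ*(n:ℝ)⌋₊:ℝ) ≤ δ*(n:ℝ) := Nat.floor_le (by positivity)
      exact_mod_cast h2.trans h1.le
  -- eventual logarithmic inequality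
  have hlog : ∀ᶠ n : ℕ in atTop,
      Real.log (p n ⌊ε*(n:ℝ)⌋₊) / (n:ℝ) + Real.log (p n ⌊δ*(n:ℝ)⌋₊) / (n:ℝ)
        ≤ ((2*n+n₀:ℕ):ℝ)/(n:ℝ) *
            (Real.log (p (2*n+n₀) ⌊γ*((2*n+n₀:ℕ):ℝ)⌋₊) / ((2*n+n₀:ℕ):ℝ)) := by
    filter_upwards [eventually_ge_atTop 1, hposε, hposδ] with n hn h1 h2
    have hn0 : (0:ℝ) < (n:ℝ) := by exact_mod_cast hn
    have hN1 : 1 ≤ 2*n+n₀ := by omega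
    have hN0 : (0:ℝ) < ((2*n+n₀:ℕ):ℝ) := by exact_mod_cast hN1
    have hprod : (0:ℝ) < ((p n ⌊ε*(n:ℝ)⌋₊ * p n ⌊δ*(n:ℝ)⌋₊ : ℕ):ℝ) := by
      exact_mod_cast Nat.mul_pos h1 h2
    have hle : Real.log ((p n ⌊ε*(n:ℝ)⌋₊ * p n ⌊δ*(n:ℝ)⌋₊ : ℕ):ℝ)
        ≤ Real.log (p (2*n+n₀) ⌊γ*((2*n+n₀:ℕ):ℝ)⌋₊) :=
      Real.log_le_log hprod (by exact_mod_cast hkey n hn)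
    rw [Nat.cast_mul,
      Real.log_mul (by exact_mod_cast h1.ne') (by exact_mod_cast h2.ne')] at hle
    have hR : ((2*n+n₀:ℕ):ℝ)/(n:ℝ) *
        (Real.log (p (2*n+n₀) ⌊γ*((2*n+n₀:ℕ):ℝ)⌋₊) / ((2*n+n₀:ℕ):ℝ))
        = Real.log (p (2*n+n₀) ⌊γ*((2*n+n₀:ℕ):ℝ)⌋₊) / (n:ℝ) := by
      field_simp
    rw [hR, ← add_div]
    gcongr
  -- pass to the limit
  have hLHS : Tendsto (fun n : ℕ =>
      Real.log (p n ⌊ε*(n:ℝ)⌋₊) / (n:ℝ) + Real.log (p n ⌊δ*(n:ℝ)⌋₊) / (n:ℝ))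
      atTop (nhds (logP ε + logP δ)) := (hP ε hε).add (hP δ hδ)
  have hfac : Tendsto (fun n : ℕ => ((2*n+n₀:ℕ):ℝ)/(n:ℝ)) atTop (nhds 2) := by
    have h0 : Tendsto (fun n : ℕ => 2 + (n₀:ℝ) * (1/(n:ℝ))) atTop
        (nhds (2 + (n₀:ℝ) * 0)) := tendsto_const_nhds.add (hinv.const_mul (n₀:ℝ))
    have h1 : Tendsto (fun n : ℕ => 2 + (n₀:ℝ) * (1/(n:ℝ))) atTop (nhds 2) := by
      simpa using h0
    refine Tendsto.congr' ?_ h1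
    filter_upwards [eventually_ge_atTop 1] with n hn
    have hn0 : ((n:ℝ)) ≠ 0 := by
      have : (0:ℝ) < (n:ℝ) := by exact_mod_cast hn
      exact this.ne'
    push_cast
    field_simp
  have hsub : Tendsto (fun n : ℕ => 2*n+n₀) atTop atTop :=
    tendsto_atTop_mono (fun n => by simp only [id_eq]; omega) tendsto_id
  have hcomp : Tendsto (fun n : ℕ =>
      Real.log (p (2*n+n₀) ⌊γ*((2*n+n₀:ℕ):ℝ)⌋₊) / ((2*n+n₀:ℕ):ℝ)) atTop
      (nhds (logP γ)) := (hP γ hγ).comp hsub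
  have hRHS := hfac.mul hcomp
  exact le_of_tendsto_of_tendsto hLHS hRHS hlog
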